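/- Let {ξ_t} and {ξ'_t} be two independent i.i.d. copies of the driving sequence, and let X_t^{(x)} be driven by {ξ_t} and Y_t^{(x)} by {ξ'_t}. (a) If the splitting condition holds with c, N, ε₁, ε₂, then P(X_N^{(1)} ≤ Y_N^{(0)}) ≥ ε₁·ε₂, and consequently, for any 0 ≤ x₀ < y₀ ≤ 1, P(X_N^{(y₀)} ≤ Y_N^{(x₀)}) ≥ ε₁·ε₂. (b) Conversely, if P(X_N^{(1)} ≤ Y_N^{(0)}) ≥ δ for some δ > 0 and integer N ≥ 1, then there exists c ∈ [0,1] such that P(X_N^{(1)} ≤ c) > 0 and P(X_N^{(0)} ≥ c) > 0. -/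

import Mathlib

open MeasureTheory ProbabilityTheory Set Filter Topology

def iterF {V : Type*} (f : ℝ → V → ℝ) : (n : ℕ) → ℝ → (Fin n → V) → ℝ
  | 0, x, _ => x
  | n+1, x, v => f (iterF f n x (fun i : Fin n => v i.castSucc)) (v (Fin.last n))

lemma iterF_measurable {V : Type*} [MeasurableSpace V] {f : ℝ → V → ℝ}
    (hf : Measurable (Function.uncurry f)) (n : ℕ) (x : ℝ) :
    Measurable (iterF f n x) := by
  induction n with
  | zero => exact measurable_const
  | succ n ih =>
    have h1 : Measurable fun v : Fin (n+1) → V => iterF f n x (fun i : Fin n => v i.castSucc) :=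
      ih.comp (measurable_pi_lambda _ fun i => measurable_pi_apply _)
    exact hf.comp (h1.prodMk (measurable_pi_apply _))

lemma aux_map_pi {Ω V ι : Type*} [MeasurableSpace Ω] [MeasurableSpace V]
    (Pr : Measure Ω) [IsProbabilityMeasure Pr]
    (ζ : ι → Ω → V) (hmeas : ∀ i, Measurable (ζ i))
    (hind : iIndepFun ζ Pr)
    (ν : Measure V) [SigmaFinite ν] (hid : ∀ i, Measure.map (ζ i) Pr = ν)
    {n : ℕ} (j : Fin n → ι) (hj : Function.Injective j) :
    Measure.map (fun ω i => ζ (j i) ω) Pr = Measure.pi (fun _ => ν) := by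
  refine (Measure.pi_eq fun s hs => ?_).symm
  rw [Measure.map_apply (measurable_pi_lambda _ fun i => hmeas (j i)) (MeasurableSet.univ_pi hs)]
  have hpre : (fun ω i => ζ (j i) ω) ⁻¹' (Set.pi univ s) = ⋂ i, ζ (j i) ⁻¹' s i := by
    ext ω; simp [Set.mem_univ_pi]
  rw [hpre]
  classical
  -- extend s along j
  set s' : ι → Set V := fun k => if h : ∃ i, j i = k then s h.choose else univ with hs'
  have hs'j : ∀ i, s' (j i) = s i := by
    intro i
    have h : ∃ i', j i' = j i := ⟨i, rfl⟩
    simp only [s', dif_pos h]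
    exact congrArg s (hj h.choose_spec)
  have hiInter : (⋂ i, ζ (j i) ⁻¹' s i) = ⋂ k ∈ Finset.image j Finset.univ, ζ k ⁻¹' s' k := by
    rw [Finset.set_biInter_finset_image]
    simp [hs'j]
  rw [hiInter]
  have hmeas' : ∀ k ∈ Finset.image j Finset.univ,
      MeasurableSet[(inferInstance : MeasurableSpace V).comap (ζ k)] (ζ k ⁻¹' s' k) := by
    intro k _
    refine ⟨s' k, ?_, rfl⟩
    by_cases h : ∃ i, j i = k
    · simp only [s', dif_pos h]; exact hs _
    · simp only [s', dif_neg h]; exact MeasurableSet.univ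
  rw [hind.meas_biInter hmeas']
  rw [Finset.prod_image (fun a _ b _ h => hj h)]
  refine Finset.prod_congr rfl fun i _ => ?_
  rw [hs'j, ← hid (j i), Measure.map_apply (hmeas (j i)) (hs i)]

/-- **splitting condition vs. strong reversing condition.**
Let `{ξ_t}` and `{ξ'_t}` be two independent i.i.d. copies of the driving sequence
(encoded as a single mutually independent, identically distributed family `ζ` indexed by
`ℕ ⊕ ℕ`), let `X_t^{(x)}` be driven by `{ξ_t} = ζ ∘ inl` and `Y_t^{(x)}` by
`{ξ'_t} = ζ ∘ inr`.
(a) If the splitting condition holds with `c, N, ε₁, ε₂`, then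
`P(X_N^{(1)} ≤ Y_N^{(0)}) ≥ ε₁·ε₂`, and consequently for any `0 ≤ x₀ < y₀ ≤ 1`,
`P(X_N^{(y₀)} ≤ Y_N^{(x₀)}) ≥ ε₁·ε₂`.
(b) Conversely, if `P(X_N^{(1)} ≤ Y_N^{(0)}) ≥ δ > 0` for some `N ≥ 1`, then there is a
`c ∈ [0,1]` with `P(X_N^{(1)} ≤ c) > 0` and `P(X_N^{(0)} ≥ c) > 0`. -/
theorem stmt4
    {Ω : Type*} [MeasurableSpace Ω] {V : Type*} [MeasurableSpace V]
    (Pr : Measure Ω) [IsProbabilityMeasure Pr]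
    (ζ : ℕ ⊕ ℕ → Ω → V) (hζ_meas : ∀ i, Measurable (ζ i))
    (hζ_indep : iIndepFun ζ Pr)
    (hζ_ident : ∀ i : ℕ ⊕ ℕ, Measure.map (ζ i) Pr = Measure.map (ζ (Sum.inl 0)) Pr)
    (f : ℝ → V → ℝ) (hf_meas : Measurable (Function.uncurry f))
    (hf_range : ∀ x ∈ Icc (0:ℝ) 1, ∀ v : V, f x v ∈ Icc (0:ℝ) 1)
    (hf_mono : ∀ v : V, ∀ x₁ ∈ Icc (0:ℝ) 1, ∀ x₂ ∈ Icc (0:ℝ) 1, x₁ ≤ x₂ → f x₁ v ≤ f x₂ v)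
    (X Y : ℝ → ℕ → Ω → ℝ)
    (hX0 : ∀ x ω, X x 0 ω = x)
    (hXrec : ∀ x t ω, X x (t + 1) ω = f (X x t ω) (ζ (Sum.inl t) ω))
    (hY0 : ∀ x ω, Y x 0 ω = x)
    (hYrec : ∀ x t ω, Y x (t + 1) ω = f (Y x t ω) (ζ (Sum.inr t) ω)) :
    -- (a)
    ((∀ c ∈ Icc (0:ℝ) 1, ∀ N : ℕ, 1 ≤ N →
        0 < Pr {ω | X 1 N ω ≤ c} → 0 < Pr {ω | c ≤ X 0 N ω} →
        Pr {ω | X 1 N ω ≤ c} * Pr {ω | c ≤ X 0 N ω} ≤ Pr {ω | X 1 N ω ≤ Y 0 N ω} ∧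
        ∀ x₀ y₀ : ℝ, 0 ≤ x₀ → x₀ < y₀ → y₀ ≤ 1 →
          Pr {ω | X 1 N ω ≤ c} * Pr {ω | c ≤ X 0 N ω} ≤ Pr {ω | X y₀ N ω ≤ Y x₀ N ω}) ∧
    -- (b)
     (∀ N : ℕ, 1 ≤ N → ∀ δ : ENNReal, 0 < δ → δ ≤ Pr {ω | X 1 N ω ≤ Y 0 N ω} →
        ∃ c ∈ Icc (0:ℝ) 1, 0 < Pr {ω | X 1 N ω ≤ c} ∧ 0 < Pr {ω | c ≤ X 0 N ω})) := by
  classical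
  set ν : Measure V := Measure.map (ζ (Sum.inl 0)) Pr with hν
  haveI : IsProbabilityMeasure ν := Measure.isProbabilityMeasure_map (hζ_meas _).aemeasurable
  -- pointwise range
  have hXmem : ∀ x ∈ Icc (0:ℝ) 1, ∀ (n : ℕ) (ω : Ω), X x n ω ∈ Icc (0:ℝ) 1 := by
    intro x hx n
    induction n with
    | zero => intro ω; rw [hX0]; exact hx
    | succ n ih => intro ω; rw [hXrec]; exact hf_range _ (ih ω) _
  have hYmem : ∀ x ∈ Icc (0:ℝ) 1, ∀ (n : ℕ) (ω : Ω), Y x n ω ∈ Icc (0:ℝ) 1 := by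
    intro x hx n
    induction n with
    | zero => intro ω; rw [hY0]; exact hx
    | succ n ih => intro ω; rw [hYrec]; exact hf_range _ (ih ω) _
  -- pointwise monotonicity
  have hXmono : ∀ x₁ ∈ Icc (0:ℝ) 1, ∀ x₂ ∈ Icc (0:ℝ) 1, x₁ ≤ x₂ →
      ∀ (n : ℕ) (ω : Ω), X x₁ n ω ≤ X x₂ n ω := by
    intro x₁ hx₁ x₂ hx₂ hle n
    induction n with
    | zero => intro ω; rw [hX0, hX0]; exact hle
    | succ n ih =>
      intro ω; rw [hXrec, hXrec]
      exact hf_mono _ _ (hXmem x₁ hx₁ n ω) _ (hXmem x₂ hx₂ n ω) (ih ω)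
  have hYmono : ∀ x₁ ∈ Icc (0:ℝ) 1, ∀ x₂ ∈ Icc (0:ℝ) 1, x₁ ≤ x₂ →
      ∀ (n : ℕ) (ω : Ω), Y x₁ n ω ≤ Y x₂ n ω := by
    intro x₁ hx₁ x₂ hx₂ hle n
    induction n with
    | zero => intro ω; rw [hY0, hY0]; exact hle
    | succ n ih =>
      intro ω; rw [hYrec, hYrec]
      exact hf_mono _ _ (hYmem x₁ hx₁ n ω) _ (hYmem x₂ hx₂ n ω) (ih ω)
  -- representation via iterF
  have hXrep : ∀ (x : ℝ) (n : ℕ) (ω : Ω),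
      X x n ω = iterF f n x (fun i : Fin n => ζ (Sum.inl i) ω) := by
    intro x n
    induction n with
    | zero => intro ω; rw [hX0]; rfl
    | succ n ih =>
      intro ω
      rw [hXrec, ih]
      show _ = iterF f (n+1) x _
      rw [iterF]
      simp
  have hYrep : ∀ (x : ℝ) (n : ℕ) (ω : Ω),
      Y x n ω = iterF f n x (fun i : Fin n => ζ (Sum.inr i) ω) := by
    intro x n
    induction n with
    | zero => intro ω; rw [hY0]; rfl
    | succ n ih =>
      intro ω
      rw [hYrec, ih]
      show _ = iterF f (n+1) x _
      rw [iterF]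
      simp
  have hvec_meas : ∀ (n : ℕ) (j : Fin n → ℕ ⊕ ℕ),
      Measurable (fun ω (i : Fin n) => ζ (j i) ω) :=
    fun n j => measurable_pi_lambda _ fun i => hζ_meas _
  have hXeq : ∀ (x : ℝ) (n : ℕ),
      X x n = (iterF f n x) ∘ (fun ω (i : Fin n) => ζ (Sum.inl i) ω) :=
    fun x n => funext (hXrep x n)
  have hYeq : ∀ (x : ℝ) (n : ℕ),
      Y x n = (iterF f n x) ∘ (fun ω (i : Fin n) => ζ (Sum.inr i) ω) :=
    fun x n => funext (hYrep x n)
  have hXmeas : ∀ (x : ℝ) (n : ℕ), Measurable (X x n) := by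
    intro x n; rw [hXeq]
    exact (iterF_measurable hf_meas n x).comp (hvec_meas n _)
  have hYmeas : ∀ (x : ℝ) (n : ℕ), Measurable (Y x n) := by
    intro x n; rw [hYeq]
    exact (iterF_measurable hf_meas n x).comp (hvec_meas n _)
  -- equality of laws
  have hinl_inj : ∀ n : ℕ, Function.Injective (fun i : Fin n => (Sum.inl i : ℕ ⊕ ℕ)) := by
    intro n a b h
    exact Fin.val_injective (Sum.inl.inj h)
  have hinr_inj : ∀ n : ℕ, Function.Injective (fun i : Fin n => (Sum.inr i : ℕ ⊕ ℕ)) := by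
    intro n a b h
    exact Fin.val_injective (Sum.inr.inj h)
  have hlaw : ∀ (x : ℝ) (n : ℕ), Measure.map (X x n) Pr = Measure.map (Y x n) Pr := by
    intro x n
    rw [hXeq, hYeq,
      ← Measure.map_map (iterF_measurable hf_meas n x) (hvec_meas n _),
      ← Measure.map_map (iterF_measurable hf_meas n x) (hvec_meas n _),
      aux_map_pi Pr ζ hζ_meas hζ_indep ν hζ_ident _ (hinl_inj n),
      aux_map_pi Pr ζ hζ_meas hζ_indep ν hζ_ident _ (hinr_inj n)]
  have hIci : ∀ (c : ℝ) (n : ℕ), Pr {ω | c ≤ Y 0 n ω} = Pr {ω | c ≤ X 0 n ω} := by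
    intro c n
    have h1 : {ω | c ≤ Y 0 n ω} = Y 0 n ⁻¹' Ici c := rfl
    have h2 : {ω | c ≤ X 0 n ω} = X 0 n ⁻¹' Ici c := rfl
    rw [h1, h2, ← Measure.map_apply (hYmeas 0 n) measurableSet_Ici,
      ← Measure.map_apply (hXmeas 0 n) measurableSet_Ici, hlaw]
  -- independence of X 1 n and Y 0 n
  have hindepXY : ∀ n : ℕ, IndepFun (X 1 n) (Y 0 n) Pr := by
    intro n
    set S : Finset (ℕ ⊕ ℕ) := (Finset.range n).image Sum.inl with hS
    set T : Finset (ℕ ⊕ ℕ) := (Finset.range n).image Sum.inr with hT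
    have hST : Disjoint S T := by
      rw [Finset.disjoint_left]
      rintro a ha hb
      rw [hS, Finset.mem_image] at ha
      rw [hT, Finset.mem_image] at hb
      obtain ⟨i, -, rfl⟩ := ha
      obtain ⟨k, -, hk⟩ := hb
      exact Sum.inl_ne_inr hk.symm
    have h := hζ_indep.indepFun_finset S T hST hζ_meas
    have hmemS : ∀ i : Fin n, (Sum.inl (i : ℕ) : ℕ ⊕ ℕ) ∈ S := by
      intro i; rw [hS, Finset.mem_image]
      exact ⟨i, Finset.mem_range.2 i.isLt, rfl⟩
    have hmemT : ∀ i : Fin n, (Sum.inr (i : ℕ) : ℕ ⊕ ℕ) ∈ T := by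
      intro i; rw [hT, Finset.mem_image]
      exact ⟨i, Finset.mem_range.2 i.isLt, rfl⟩
    have hgS : Measurable fun u : S → V => iterF f n 1 (fun i : Fin n => u ⟨_, hmemS i⟩) :=
      (iterF_measurable hf_meas n 1).comp (measurable_pi_lambda _ fun i => measurable_pi_apply _)
    have hgT : Measurable fun u : T → V => iterF f n 0 (fun i : Fin n => u ⟨_, hmemT i⟩) :=
      (iterF_measurable hf_meas n 0).comp (measurable_pi_lambda _ fun i => measurable_pi_apply _)
    have h2 := h.comp hgS hgT
    have hx : X 1 n = (fun u : S → V => iterF f n 1 (fun i : Fin n => u ⟨_, hmemS i⟩)) ∘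
        (fun a (i : S) => ζ i a) := by
      funext ω; exact hXrep 1 n ω
    have hy : Y 0 n = (fun u : T → V => iterF f n 0 (fun i : Fin n => u ⟨_, hmemT i⟩)) ∘
        (fun a (i : T) => ζ i a) := by
      funext ω; exact hYrep 0 n ω
    rw [hx, hy]
    exact h2
  constructor
  · -- part (a)
    intro c hc N hN h1 h2
    have key : Pr {ω | X 1 N ω ≤ c} * Pr {ω | c ≤ X 0 N ω} ≤ Pr {ω | X 1 N ω ≤ Y 0 N ω} := by
      rw [← hIci c N]
      have hA : MeasurableSet[(inferInstance : MeasurableSpace ℝ).comap (X 1 N)]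
          (X 1 N ⁻¹' Iic c) := ⟨Iic c, measurableSet_Iic, rfl⟩
      have hB : MeasurableSet[(inferInstance : MeasurableSpace ℝ).comap (Y 0 N)]
          (Y 0 N ⁻¹' Ici c) := ⟨Ici c, measurableSet_Ici, rfl⟩
      have hmul := (hindepXY N).meas_inter hA hB
      have hAeq : X 1 N ⁻¹' Iic c = {ω | X 1 N ω ≤ c} := rfl
      have hBeq : Y 0 N ⁻¹' Ici c = {ω | c ≤ Y 0 N ω} := rfl
      rw [hAeq, hBeq] at hmul
      rw [← hmul]
      refine measure_mono ?_
      rintro ω ⟨hω1, hω2⟩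
      exact le_trans (show X 1 N ω ≤ c from hω1) (show c ≤ Y 0 N ω from hω2)
    refine ⟨key, fun x₀ y₀ hx₀ hxy hy₀ => ?_⟩
    refine le_trans key (measure_mono ?_)
    intro ω hω
    have hx₀m : x₀ ∈ Icc (0:ℝ) 1 := ⟨hx₀, le_trans (le_of_lt hxy) hy₀⟩
    have hy₀m : y₀ ∈ Icc (0:ℝ) 1 := ⟨le_trans hx₀ (le_of_lt hxy), hy₀⟩
    have h01 : (0:ℝ) ∈ Icc (0:ℝ) 1 := ⟨le_refl 0, zero_le_one⟩
    have h11 : (1:ℝ) ∈ Icc (0:ℝ) 1 := ⟨zero_le_one, le_refl 1⟩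
    calc X y₀ N ω ≤ X 1 N ω := hXmono y₀ hy₀m 1 h11 hy₀ N ω
      _ ≤ Y 0 N ω := hω
      _ ≤ Y x₀ N ω := hYmono 0 h01 x₀ hx₀m hx₀ N ω
  · -- part (b)
    intro N hN δ hδ hδle
    have h01 : (0:ℝ) ∈ Icc (0:ℝ) 1 := ⟨le_refl 0, zero_le_one⟩
    have h11 : (1:ℝ) ∈ Icc (0:ℝ) 1 := ⟨zero_le_one, le_refl 1⟩
    set A : Set ℝ := {c | 0 < Pr {ω | X 1 N ω ≤ c}} with hA
    have h1A : (1:ℝ) ∈ A := by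
      have : {ω | X 1 N ω ≤ 1} = univ := by
        ext ω; simpa using (hXmem 1 h11 N ω).2
      simp [hA, this]
    have hAne : A.Nonempty := ⟨1, h1A⟩
    have hAbdd : BddBelow A := by
      refine ⟨0, fun c hc => ?_⟩
      by_contra hcn
      push_neg at hcn
      have : {ω | X 1 N ω ≤ c} = ∅ := by
        ext ω
        simp only [mem_setOf_eq, mem_empty_iff_false, iff_false, not_le]
        exact lt_of_lt_of_le hcn (hXmem 1 h11 N ω).1
      rw [hA, mem_setOf_eq, this] at hc
      simp at hc
    set c₀ : ℝ := sInf A with hc₀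
    have hc₀0 : 0 ≤ c₀ := le_csInf hAne (fun c hc => by
      by_contra hcn
      push_neg at hcn
      have : {ω | X 1 N ω ≤ c} = ∅ := by
        ext ω
        simp only [mem_setOf_eq, mem_empty_iff_false, iff_false, not_le]
        exact lt_of_lt_of_le hcn (hXmem 1 h11 N ω).1
      rw [hA, mem_setOf_eq, this] at hc
      simp at hc)
    have hc₀1 : c₀ ≤ 1 := csInf_le hAbdd h1A
    -- P(X 1 N < c₀) = 0
    have hlt0 : Pr {ω | X 1 N ω < c₀} = 0 := by
      have hsub : {ω | X 1 N ω < c₀} ⊆ ⋃ n : ℕ, {ω | X 1 N ω ≤ c₀ - 1/(n+1)} := by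
        intro ω hω
        rw [mem_setOf_eq] at hω
        obtain ⟨n, hn⟩ := exists_nat_one_div_lt (sub_pos.2 hω)
        refine mem_iUnion.2 ⟨n, ?_⟩
        rw [mem_setOf_eq]
        linarith
      refine le_antisymm (le_trans (measure_mono hsub) ?_) zero_le
      rw [show (0:ENNReal) = ∑' _ : ℕ, (0:ENNReal) by simp]
      refine le_trans (measure_iUnion_le _) (ENNReal.tsum_le_tsum fun n => ?_)
      have hnotin : (c₀ - 1/(n+1) : ℝ) ∉ A := fun hmem =>
        absurd (csInf_le hAbdd hmem) (by
          rw [← hc₀]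
          push_neg
          have : (0:ℝ) < 1/(n+1) := by positivity
          linarith)
      rw [hA, mem_setOf_eq, not_lt] at hnotin
      exact le_trans hnotin (le_refl 0)
    by_cases hcase : 0 < Pr {ω | X 1 N ω ≤ c₀}
    · refine ⟨c₀, ⟨hc₀0, hc₀1⟩, hcase, ?_⟩
      rw [← hIci c₀ N]
      have hsub : {ω | X 1 N ω ≤ Y 0 N ω} ⊆ {ω | X 1 N ω < c₀} ∪ {ω | c₀ ≤ Y 0 N ω} := by
        intro ω hω
        rw [mem_setOf_eq] at hω
        by_cases h : X 1 N ω < c₀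
        · exact Or.inl h
        · push_neg at h
          exact Or.inr (le_trans h hω)
      have := le_trans hδle (le_trans (measure_mono hsub)
        (le_trans (measure_union_le _ _) (by rw [hlt0, zero_add])))
      exact lt_of_lt_of_le hδ this
    · -- P(X 1 N ≤ c₀) = 0
      push_neg at hcase
      have hc₀n : Pr {ω | X 1 N ω ≤ c₀} = 0 := le_antisymm hcase zero_le
      have hsub : {ω | X 1 N ω ≤ Y 0 N ω} ⊆
          {ω | X 1 N ω ≤ c₀} ∪ ⋃ n : ℕ, {ω | c₀ + 1/(n+1) ≤ Y 0 N ω} := by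
        intro ω hω
        rw [mem_setOf_eq] at hω
        by_cases h : X 1 N ω ≤ c₀
        · exact Or.inl h
        · push_neg at h
          have hY : c₀ < Y 0 N ω := lt_of_lt_of_le h hω
          obtain ⟨n, hn⟩ := exists_nat_one_div_lt (sub_pos.2 hY)
          refine Or.inr (mem_iUnion.2 ⟨n, ?_⟩)
          rw [mem_setOf_eq]
          linarith
      have hpos : 0 < Pr (⋃ n : ℕ, {ω | c₀ + 1/(n+1) ≤ Y 0 N ω}) := by
        have := le_trans hδle (le_trans (measure_mono hsub)
          (le_trans (measure_union_le _ _) (by rw [hc₀n, zero_add])))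
        exact lt_of_lt_of_le hδ this
      have : ∃ n : ℕ, 0 < Pr {ω | c₀ + 1/(n+1) ≤ Y 0 N ω} := by
        by_contra hcon
        push_neg at hcon
        have : Pr (⋃ n : ℕ, {ω | c₀ + 1/(n+1) ≤ Y 0 N ω}) = 0 :=
          measure_iUnion_null fun n => le_antisymm (hcon n) zero_le
        rw [this] at hpos
        exact lt_irrefl 0 hpos
      obtain ⟨n, hnpos⟩ := this
      set c : ℝ := c₀ + 1/(n+1) with hcdef
      have hcpos : c₀ < c := by
        rw [hcdef]
        have : (0:ℝ) < 1/(n+1) := by positivity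
        linarith
      have hc1 : c ≤ 1 := by
        have hne : {ω | c ≤ Y 0 N ω}.Nonempty := by
          by_contra hcon
          rw [not_nonempty_iff_eq_empty] at hcon
          rw [hcon] at hnpos
          simp at hnpos
        obtain ⟨ω, hω⟩ := hne
        exact le_trans hω (hYmem 0 h01 N ω).2
      refine ⟨c, ⟨le_trans hc₀0 (le_of_lt hcpos), hc1⟩, ?_, ?_⟩
      · obtain ⟨a, haA, hac⟩ := exists_lt_of_csInf_lt hAne hcpos
        rw [hA, mem_setOf_eq] at haA
        refine lt_of_lt_of_le haA (measure_mono ?_)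
        intro ω hω
        exact le_trans hω (le_of_lt hac)
      · rw [← hIci c N]
        exact hnpos
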